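/- Let (Ω, Σ) and (Ω', Σ') be measurable spaces, H a separable complex Hilbert space, and let M₁ ∈ O_Σ(H) and M₂ ∈ O_{Σ'}(H) be jointly measurable observables (POVMs), i.e. there exists a POVM M ∈ O_{Σ⊗Σ'}(H) with M(X × Ω') = M₁(X) and M(Ω × Y) = M₂(Y) for all X ∈ Σ, Y ∈ Σ'. If M₁ is extremal in O_Σ(H) or M₂ is extremal in O_{Σ'}(H), then the joint observable M is unique. -/

import Mathlib

open scoped ComplexOrder ComplexInnerProductSpace Topology

noncomputable section

/-- A normalized positive operator valued measure (POVM, observable) on the measurable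
space `Ω` with values in `L(H)`: positive operator values, `M univ = 1`, and σ-additivity
in the weak operator topology. -/
def IsPOVM {Ω : Type*} [MeasurableSpace Ω] {H : Type*}
    [NormedAddCommGroup H] [InnerProductSpace ℂ H] [CompleteSpace H]
    (M : Set Ω → H →L[ℂ] H) : Prop :=
  (∀ X : Set Ω, MeasurableSet X → (M X).IsPositive) ∧
  M Set.univ = 1 ∧
  ∀ f : ℕ → Set Ω, (∀ n, MeasurableSet (f n)) → Pairwise (Function.onFun Disjoint f) →
    ∀ x y : H, HasSum (fun n => ⟪x, M (f n) y⟫) ⟪x, M (⋃ n, f n) y⟫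

/-- A POVM is extremal in the convex set of all POVMs on the same σ-algebra. -/
def IsExtremalPOVM {Ω : Type*} [MeasurableSpace Ω] {H : Type*}
    [NormedAddCommGroup H] [InnerProductSpace ℂ H] [CompleteSpace H]
    (M : Set Ω → H →L[ℂ] H) : Prop :=
  IsPOVM M ∧ ∀ M₁ M₂ : Set Ω → H →L[ℂ] H, IsPOVM M₁ → IsPOVM M₂ →
    ∀ t : ℝ, 0 < t → t < 1 →
    (∀ X : Set Ω, MeasurableSet X → M X = (t : ℂ) • M₁ X + ((1 - t : ℝ) : ℂ) • M₂ X) →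
    ∀ X : Set Ω, MeasurableSet X → M₁ X = M₂ X

section Aux

set_option linter.unusedSectionVars false

variable {Ω : Type*} [MeasurableSpace Ω] {H : Type*}
  [NormedAddCommGroup H] [InnerProductSpace ℂ H] [CompleteSpace H]

/-- Two operators agreeing on all inner products are equal. -/
lemma clm_ext_inner {A B : H →L[ℂ] H} (h : ∀ x y : H, ⟪x, A y⟫ = ⟪x, B y⟫) : A = B := by
  ext y
  exact ext_inner_left ℂ fun x => h x y

lemma IsPOVM.empty' {M : Set Ω → H →L[ℂ] H} (hM : IsPOVM M) : M ∅ = 0 := by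
  refine clm_ext_inner fun x y => ?_
  have h := hM.2.2 (fun _ => (∅ : Set Ω)) (fun _ => MeasurableSet.empty)
      (fun i j hij => by simp [Function.onFun]) x y
  simp only [Set.iUnion_empty] at h
  have h0 : ⟪x, M ∅ y⟫ = 0 := (summable_const_iff _).mp h.summable
  simpa using h0

lemma IsPOVM.union' {M : Set Ω → H →L[ℂ] H} (hM : IsPOVM M) {X Y : Set Ω}
    (hX : MeasurableSet X) (hY : MeasurableSet Y) (hd : Disjoint X Y) :
    M (X ∪ Y) = M X + M Y := by
  classical
  set f : ℕ → Set Ω := fun n => if n = 0 then X else if n = 1 then Y else ∅ with hf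
  have hmeas : ∀ n, MeasurableSet (f n) := by
    intro n; simp only [hf]
    split_ifs <;> first | exact hX | exact hY | exact MeasurableSet.empty
  have hdis : Pairwise (Function.onFun Disjoint f) := by
    intro i j hij
    simp only [Function.onFun, hf]
    split_ifs <;> simp_all [hd, hd.symm]
  have hU : (⋃ n, f n) = X ∪ Y := by
    apply Set.Subset.antisymm
    · refine Set.iUnion_subset fun n => ?_
      simp only [hf]
      split_ifs <;> simp
    · rintro a (h | h)
      · exact Set.mem_iUnion.2 ⟨0, by simp [hf, h]⟩
      · exact Set.mem_iUnion.2 ⟨1, by simp [hf, h]⟩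
  refine clm_ext_inner fun x y => ?_
  have h := hM.2.2 f hmeas hdis x y
  rw [hU] at h
  have h2 : HasSum (fun n => ⟪x, M (f n) y⟫)
      (∑ n ∈ ({0, 1} : Finset ℕ), ⟪x, M (f n) y⟫) := by
    refine hasSum_sum_of_ne_finset_zero fun n hn => ?_
    simp only [Finset.mem_insert, Finset.mem_singleton, not_or] at hn
    simp [hf, hn.1, hn.2, hM.empty']
  have := h.unique h2
  rw [this]
  simp [hf, inner_add_right]

lemma IsPOVM.compl' {M : Set Ω → H →L[ℂ] H} (hM : IsPOVM M) {X : Set Ω}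
    (hX : MeasurableSet X) : M Xᶜ = 1 - M X := by
  have h := hM.union' hX hX.compl disjoint_compl_right
  rw [Set.union_compl_self, hM.2.1] at h
  rw [eq_sub_iff_add_eq, add_comm, h]

lemma IsPOVM.map {Ω' : Type*} [MeasurableSpace Ω'] {M : Set Ω → H →L[ℂ] H}
    (hM : IsPOVM M) {g : Ω → Ω'} (hg : Measurable g) :
    IsPOVM (fun Z : Set Ω' => M (g ⁻¹' Z)) := by
  refine ⟨fun X hX => hM.1 _ (hg hX), ?_, fun f hf hdis x y => ?_⟩
  · show M (g ⁻¹' Set.univ) = 1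
    rw [Set.preimage_univ, hM.2.1]
  · have h := hM.2.2 (fun n => g ⁻¹' f n) (fun n => hg (hf n))
      (fun i j hij => Disjoint.preimage g (hdis hij)) x y
    simpa [Set.preimage_iUnion] using h

end Aux

/-- Key step: if the first marginal is extremal, then any two joint observables agree
on measurable rectangles. -/
lemma rect_eq_of_fst_extremal
    {Ω Ω' : Type*} [MeasurableSpace Ω] [MeasurableSpace Ω']
    {H : Type*} [NormedAddCommGroup H] [InnerProductSpace ℂ H] [CompleteSpace H]
    (M₁ : Set Ω → H →L[ℂ] H) (M₂ : Set Ω' → H →L[ℂ] H)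
    (hM₂ : IsPOVM M₂)
    (M M' : Set (Ω × Ω') → H →L[ℂ] H) (hM : IsPOVM M) (hM' : IsPOVM M')
    (hmarg₁ : ∀ X : Set Ω, MeasurableSet X → M (X ×ˢ (Set.univ : Set Ω')) = M₁ X)
    (hmarg₂ : ∀ Y : Set Ω', MeasurableSet Y → M ((Set.univ : Set Ω) ×ˢ Y) = M₂ Y)
    (hmarg₁' : ∀ X : Set Ω, MeasurableSet X → M' (X ×ˢ (Set.univ : Set Ω')) = M₁ X)
    (hmarg₂' : ∀ Y : Set Ω', MeasurableSet Y → M' ((Set.univ : Set Ω) ×ˢ Y) = M₂ Y)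
    (hext : IsExtremalPOVM M₁) :
    ∀ (X : Set Ω) (Y : Set Ω'), MeasurableSet X → MeasurableSet Y →
      M (X ×ˢ Y) = M' (X ×ˢ Y) := by
  intro X Y hX hY
  set A : Set Ω → H →L[ℂ] H := fun U => M (U ×ˢ Y) + M' (U ×ˢ Yᶜ) with hAdef
  set B : Set Ω → H →L[ℂ] H := fun U => M' (U ×ˢ Y) + M (U ×ˢ Yᶜ) with hBdef
  -- a general σ-additivity helper for such combinations
  have sigma_add : ∀ (P Q : Set (Ω × Ω') → H →L[ℂ] H), IsPOVM P → IsPOVM Q →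
      ∀ f : ℕ → Set Ω, (∀ n, MeasurableSet (f n)) → Pairwise (Function.onFun Disjoint f) →
      ∀ x y : H, HasSum (fun n => ⟪x, (P (f n ×ˢ Y) + Q (f n ×ˢ Yᶜ)) y⟫)
        ⟪x, (P ((⋃ n, f n) ×ˢ Y) + Q ((⋃ n, f n) ×ˢ Yᶜ)) y⟫ := by
    intro P Q hP hQ f hmeas hdis x y
    have h1 := hP.2.2 (fun n => f n ×ˢ Y) (fun n => (hmeas n).prod hY)
      (fun i j hij => Set.Disjoint.set_prod_left (hdis hij) _ _) x y
    have h2 := hQ.2.2 (fun n => f n ×ˢ Yᶜ) (fun n => (hmeas n).prod hY.compl)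
      (fun i j hij => Set.Disjoint.set_prod_left (hdis hij) _ _) x y
    rw [← Set.iUnion_prod_const] at h1 h2
    have h3 := h1.add h2
    simp only [ContinuousLinearMap.add_apply, inner_add_right]
    exact h3
  -- A and B are POVMs
  have hApos : IsPOVM A := by
    refine ⟨fun U hU => (hM.1 _ (hU.prod hY)).add (hM'.1 _ (hU.prod hY.compl)), ?_,
      fun f hf hdis x y => sigma_add M M' hM hM' f hf hdis x y⟩
    show M (Set.univ ×ˢ Y) + M' (Set.univ ×ˢ Yᶜ) = 1
    rw [hmarg₂ Y hY, hmarg₂' Yᶜ hY.compl, hM₂.compl' hY]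
    abel
  have hBpos : IsPOVM B := by
    refine ⟨fun U hU => (hM'.1 _ (hU.prod hY)).add (hM.1 _ (hU.prod hY.compl)), ?_,
      fun f hf hdis x y => sigma_add M' M hM' hM f hf hdis x y⟩
    show M' (Set.univ ×ˢ Y) + M (Set.univ ×ˢ Yᶜ) = 1
    rw [hmarg₂' Y hY, hmarg₂ Yᶜ hY.compl, hM₂.compl' hY]
    abel
  -- decomposition of M₁ along Y
  have hsplit : ∀ (N : Set (Ω × Ω') → H →L[ℂ] H), IsPOVM N →
      (∀ X : Set Ω, MeasurableSet X → N (X ×ˢ (Set.univ : Set Ω')) = M₁ X) →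
      ∀ U : Set Ω, MeasurableSet U → M₁ U = N (U ×ˢ Y) + N (U ×ˢ Yᶜ) := by
    intro N hN hmargN U hU
    have hunion : U ×ˢ (Set.univ : Set Ω') = U ×ˢ Y ∪ U ×ˢ Yᶜ := by
      rw [← Set.prod_union, Set.union_compl_self]
    rw [← hmargN U hU, hunion]
    exact hN.union' (hU.prod hY) (hU.prod hY.compl)
      (Set.Disjoint.set_prod_right disjoint_compl_right _ _)
  -- M₁ is a midpoint of A and B
  have hconv : ∀ U : Set Ω, MeasurableSet U →
      M₁ U = ((1/2 : ℝ) : ℂ) • A U + ((1 - (1/2 : ℝ) : ℝ) : ℂ) • B U := by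
    intro U hU
    have e1 := hsplit M hM hmarg₁ U hU
    have e2 := hsplit M' hM' hmarg₁' U hU
    have : (2 : ℂ) • M₁ U = A U + B U := by
      rw [two_smul]
      nth_rewrite 1 [e1]
      nth_rewrite 1 [e2]
      simp only [hAdef, hBdef]
      abel
    have h2 : M₁ U = ((1/2 : ℝ) : ℂ) • (A U + B U) := by
      rw [← this, smul_smul]
      norm_num
    rw [h2, smul_add]
    norm_num
  have hAB := hext.2 A B hApos hBpos (1/2) (by norm_num) (by norm_num) hconv
  have eq1 : A X = B X := hAB X hX
  have eq2 : M (X ×ˢ Y) + M (X ×ˢ Yᶜ) = M' (X ×ˢ Y) + M' (X ×ˢ Yᶜ) := by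
    rw [← hsplit M hM hmarg₁ X hX, ← hsplit M' hM' hmarg₁' X hX]
  -- cancel to conclude
  simp only [hAdef, hBdef] at eq1
  have h2 : (2 : ℂ) • M (X ×ˢ Y) = (2 : ℂ) • M' (X ×ˢ Y) := by
    have hsum := congrArg₂ (· + ·) eq1 eq2
    try simp only at hsum
    rw [two_smul, two_smul]
    have := add_right_cancel (b := M (X ×ˢ Yᶜ) + M' (X ×ˢ Yᶜ))
      (a := M (X ×ˢ Y) + M (X ×ˢ Y)) (c := M' (X ×ˢ Y) + M' (X ×ˢ Y)) ?_
    · exact this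
    · calc M (X ×ˢ Y) + M (X ×ˢ Y) + (M (X ×ˢ Yᶜ) + M' (X ×ˢ Yᶜ))
          = (M (X ×ˢ Y) + M' (X ×ˢ Yᶜ)) + (M (X ×ˢ Y) + M (X ×ˢ Yᶜ)) := by abel
        _ = (M' (X ×ˢ Y) + M (X ×ˢ Yᶜ)) + (M' (X ×ˢ Y) + M' (X ×ˢ Yᶜ)) := by rw [eq1, eq2]
        _ = M' (X ×ˢ Y) + M' (X ×ˢ Y) + (M (X ×ˢ Yᶜ) + M' (X ×ˢ Yᶜ)) := by abel
  exact smul_right_injective _ (two_ne_zero) h2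

/-- **Uniqueness of the joint observable** (items (b) & (e) of the paper). Let `M₁` and
`M₂` be jointly measurable POVMs on `(Ω, Σ)` and `(Ω', Σ')` with values in `L(H)`, `H`
separable, i.e. both are marginals of a joint POVM on the product σ-algebra. If `M₁` or
`M₂` is extremal, then the joint observable is unique: any two joint observables `M`, `M'`
agree on the product σ-algebra. -/
theorem joint_observable_unique_of_extremal_marginal
    {Ω Ω' : Type*} [MeasurableSpace Ω] [MeasurableSpace Ω']
    {H : Type*} [NormedAddCommGroup H] [InnerProductSpace ℂ H] [CompleteSpace H]
    [TopologicalSpace.SeparableSpace H]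
    (M₁ : Set Ω → H →L[ℂ] H) (M₂ : Set Ω' → H →L[ℂ] H)
    (hM₁ : IsPOVM M₁) (hM₂ : IsPOVM M₂)
    (M M' : Set (Ω × Ω') → H →L[ℂ] H) (hM : IsPOVM M) (hM' : IsPOVM M')
    (hmarg₁ : ∀ X : Set Ω, MeasurableSet X → M (X ×ˢ (Set.univ : Set Ω')) = M₁ X)
    (hmarg₂ : ∀ Y : Set Ω', MeasurableSet Y → M ((Set.univ : Set Ω) ×ˢ Y) = M₂ Y)
    (hmarg₁' : ∀ X : Set Ω, MeasurableSet X → M' (X ×ˢ (Set.univ : Set Ω')) = M₁ X)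
    (hmarg₂' : ∀ Y : Set Ω', MeasurableSet Y → M' ((Set.univ : Set Ω) ×ˢ Y) = M₂ Y)
    (hext : IsExtremalPOVM M₁ ∨ IsExtremalPOVM M₂) :
    ∀ Z : Set (Ω × Ω'), MeasurableSet Z → M Z = M' Z := by
  -- first, equality on measurable rectangles
  have key : ∀ (X : Set Ω) (Y : Set Ω'), MeasurableSet X → MeasurableSet Y →
      M (X ×ˢ Y) = M' (X ×ˢ Y) := by
    rcases hext with h1 | h2
    · exact rect_eq_of_fst_extremal M₁ M₂ hM₂ M M' hM hM'
        hmarg₁ hmarg₂ hmarg₁' hmarg₂' h1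
    · -- swap the coordinates and apply the same lemma
      intro X Y hX hY
      have hswap :
          ∀ (Y : Set Ω') (X : Set Ω), MeasurableSet Y → MeasurableSet X →
          M (Prod.swap ⁻¹' (Y ×ˢ X)) = M' (Prod.swap ⁻¹' (Y ×ˢ X)) := by
        refine rect_eq_of_fst_extremal M₂ M₁ hM₁
          (fun Z => M (Prod.swap ⁻¹' Z)) (fun Z => M' (Prod.swap ⁻¹' Z))
          (hM.map measurable_swap) (hM'.map measurable_swap)
          ?_ ?_ ?_ ?_ h2
        · intro Y hY
          show M (Prod.swap ⁻¹' (Y ×ˢ Set.univ)) = M₂ Y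
          rw [Set.preimage_swap_prod]
          exact hmarg₂ Y hY
        · intro X hX
          show M (Prod.swap ⁻¹' ((Set.univ : Set Ω') ×ˢ X)) = M₁ X
          rw [Set.preimage_swap_prod]
          exact hmarg₁ X hX
        · intro Y hY
          show M' (Prod.swap ⁻¹' (Y ×ˢ Set.univ)) = M₂ Y
          rw [Set.preimage_swap_prod]
          exact hmarg₂' Y hY
        · intro X hX
          show M' (Prod.swap ⁻¹' ((Set.univ : Set Ω') ×ˢ X)) = M₁ X
          rw [Set.preimage_swap_prod]
          exact hmarg₁' X hX
      have := hswap Y X hY hX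
      rwa [Set.preimage_swap_prod] at this
  -- then extend to the whole product σ-algebra by the π-λ theorem
  refine MeasurableSpace.induction_on_inter generateFrom_prod.symm isPiSystem_prod ?_ ?_ ?_ ?_
  · rw [hM.empty', hM'.empty']
  · rintro t ⟨s, hs, u, hu, rfl⟩
    exact key s u hs hu
  · intro t ht hC
    rw [hM.compl' ht, hM'.compl' ht, hC]
  · intro f hdis hmeas hC
    refine clm_ext_inner fun x y => ?_
    have h1 := hM.2.2 f hmeas hdis x y
    have h2 := hM'.2.2 f hmeas hdis x y
    have hfun : (fun n => ⟪x, M (f n) y⟫) = fun n => ⟪x, M' (f n) y⟫ := by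
      funext n; rw [hC n]
    rw [hfun] at h1
    exact h1.unique h2
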